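/- For every n ≥ 1, the set of extreme points of the polytope ASM_n is exactly the set of n×n alternating sign matrices; that is, every n×n alternating sign matrix is an extreme point of ASM_n and every extreme point of ASM_n is an n×n alternating sign matrix. -/

import Mathlib

open scoped BigOperators

/-- The nonzero entries of the vector `v` alternate in sign: any two nonzero
entries with only zeros strictly between them have opposite values. -/
def AlternatesSign {n : ℕ} (v : Fin n → ℝ) : Prop :=
  ∀ j₁ j₂ : Fin n, j₁ < j₂ → v j₁ ≠ 0 → v j₂ ≠ 0 →
    (∀ k : Fin n, j₁ < k → k < j₂ → v k = 0) → v j₂ = -v j₁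

/-- `A` is an `n × n` alternating sign matrix: entries in `{0, 1, -1}`, each row
and column sums to `1`, and the nonzero entries of each row and column
alternate in sign. -/
def IsASM (n : ℕ) (A : Matrix (Fin n) (Fin n) ℝ) : Prop :=
  (∀ i j, A i j = 0 ∨ A i j = 1 ∨ A i j = -1) ∧
  (∀ i, ∑ j, A i j = 1) ∧
  (∀ j, ∑ i, A i j = 1) ∧
  (∀ i, AlternatesSign (fun j => A i j)) ∧
  (∀ j, AlternatesSign (fun i => A i j))

/-- The alternating sign matrix polytope: the convex hull of the ASMs. -/
def ASMPolytope (n : ℕ) : Set (Matrix (Fin n) (Fin n) ℝ) :=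
  convexHull ℝ {A : Matrix (Fin n) (Fin n) ℝ | IsASM n A}

open Finset in
private lemma prefix_inv {m : ℕ} (v : Fin (m+1) → ℝ) (halt : AlternatesSign v) (i : Fin (m+1)) :
    ((∀ j ≤ i, v j = 0) ∧ (∑ k ∈ Finset.Iic i, v k) = 0)
    ∨ ∃ j₀ j : Fin (m+1), j₀ ≤ j ∧ j ≤ i ∧ v j₀ ≠ 0 ∧ v j ≠ 0 ∧
        (∀ k, k < j₀ → v k = 0) ∧ (∀ k, j < k → k ≤ i → v k = 0) ∧
        2 * (∑ k ∈ Finset.Iic i, v k) = v j + v j₀ := by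
  induction i using Fin.induction with
  | zero =>
    have h0 : Finset.Iic (0 : Fin (m+1)) = {0} := by
      ext k; simp [Fin.le_zero_iff]
    by_cases hv0 : v 0 = 0
    · left
      refine ⟨fun j hj => ?_, by simp [h0, hv0]⟩
      rw [Fin.le_zero_iff] at hj; rw [hj]; exact hv0
    · right
      refine ⟨0, 0, le_refl _, le_refl _, hv0, hv0, ?_, ?_, ?_⟩
      · intro k hk; exact absurd hk (by simp)
      · intro k hk1 hk2; exact absurd (lt_of_lt_of_le hk1 hk2) (lt_irrefl _)
      · simp [h0]; ring
  | succ i ih =>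
    have hnot : (i.succ : Fin (m+1)) ∉ Finset.Iic i.castSucc := by
      simp [Fin.le_castSucc_iff]
    have hins : Finset.Iic i.succ = insert i.succ (Finset.Iic i.castSucc) := by
      ext k
      simp only [Finset.mem_Iic, Finset.mem_insert, Fin.le_castSucc_iff]
      constructor
      · intro h; rcases lt_or_eq_of_le h with h | h
        · exact Or.inr h
        · exact Or.inl h
      · rintro (rfl | h); · exact le_refl _
        · exact le_of_lt h
    have hsum : ∑ k ∈ Finset.Iic i.succ, v k = v i.succ + ∑ k ∈ Finset.Iic i.castSucc, v k := by
      rw [hins, Finset.sum_insert hnot]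
    have hle' : ∀ k : Fin (m+1), k ≤ i.succ → k = i.succ ∨ k ≤ i.castSucc := by
      intro k hk
      rcases lt_or_eq_of_le hk with h | h
      · exact Or.inr (Fin.le_castSucc_iff.mpr h)
      · exact Or.inl h
    by_cases h0 : v i.succ = 0
    · rcases ih with ⟨hz, hs⟩ | ⟨j₀, j, h1, h2, h3, h4, h5, h6, h7⟩
      · left
        refine ⟨fun j hj => ?_, by rw [hsum, hs, h0]; ring⟩
        rcases hle' j hj with rfl | hj'
        · exact h0
        · exact hz j hj'
      · right
        refine ⟨j₀, j, h1, le_trans h2 (le_of_lt (Fin.castSucc_lt_succ (i := i))), h3, h4, h5, ?_, ?_⟩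
        · intro k hk1 hk2
          rcases hle' k hk2 with rfl | hk'
          · exact h0
          · exact h6 k hk1 hk'
        · rw [hsum, h0]; linarith
    · rcases ih with ⟨hz, hs⟩ | ⟨j₀, j, h1, h2, h3, h4, h5, h6, h7⟩
      · right
        refine ⟨i.succ, i.succ, le_refl _, le_refl _, h0, h0, ?_, ?_, ?_⟩
        · intro k hk; exact hz k (Fin.le_castSucc_iff.mpr hk)
        · intro k hk1 hk2; exact absurd (lt_of_lt_of_le hk1 hk2) (lt_irrefl _)
        · rw [hsum, hs]; ring
      · have hjlt : j < i.succ := lt_of_le_of_lt h2 (Fin.castSucc_lt_succ (i := i))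
        have halt' : v i.succ = - v j :=
          halt j i.succ hjlt h4 h0 (fun k hk1 hk2 => h6 k hk1 (Fin.le_castSucc_iff.mpr hk2))
        right
        refine ⟨j₀, i.succ, le_of_lt (lt_of_le_of_lt h1 hjlt), le_refl _, h3, h0, h5, ?_, ?_⟩
        · intro k hk1 hk2; exact absurd (lt_of_lt_of_le hk1 hk2) (lt_irrefl _)
        · rw [hsum]; rw [halt'] at *; linarith

open Finset in
private lemma prefix_mem {m : ℕ} (v : Fin (m+1) → ℝ)
    (hv : ∀ j, v j = 0 ∨ v j = 1 ∨ v j = -1) (halt : AlternatesSign v)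
    (hsum : ∑ j, v j = 1) (i : Fin (m+1)) :
    (∑ k ∈ Finset.Iic i, v k) = 0 ∨ (∑ k ∈ Finset.Iic i, v k) = 1 := by
  have hIic : Finset.Iic (Fin.last m) = Finset.univ := by
    ext k; simp [Fin.le_last]
  have hlast := prefix_inv v halt (Fin.last m)
  rw [hIic, hsum] at hlast
  rcases hlast with ⟨-, h⟩ | ⟨j₀, jl, -, -, hj₀ne, hjlne, hj₀min, -, heq⟩
  · norm_num at h
  · -- v j₀ = 1
    have hval : ∀ k : Fin (m+1), v k ≠ 0 → v k ≤ 1 := by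
      intro k hk; rcases hv k with h | h | h
      · exact absurd h hk
      · rw [h]
      · rw [h]; norm_num
    have hj₀1 : v j₀ = 1 := by
      have h1 := hval j₀ hj₀ne
      have h2 := hval jl hjlne
      rcases hv j₀ with h | h | h
      · exact absurd h hj₀ne
      · exact h
      · rcases hv jl with h' | h' | h' <;> rw [h, h'] at heq <;> norm_num at heq
    have hinst := prefix_inv v halt i
    rcases hinst with ⟨-, h⟩ | ⟨j₀', j, -, -, hj₀'ne, hjne, hj₀'min, -, heq'⟩
    · exact Or.inl h
    · have hj₀eq : j₀' = j₀ := by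
        rcases lt_trichotomy j₀' j₀ with h | h | h
        · exact absurd (hj₀min j₀' h) hj₀'ne
        · exact h
        · exact absurd (hj₀'min j₀ h) hj₀ne
      rw [hj₀eq, hj₀1] at heq'
      rcases hv j with h | h | h
      · exact absurd h hjne
      · right; rw [h] at heq'; linarith
      · left; rw [h] at heq'; linarith

open Finset in
private noncomputable def pcs {n : ℕ} (M : Matrix (Fin n) (Fin n) ℝ) (i j : Fin n) : ℝ :=
  ∑ k ∈ Finset.Iic i, M k j

private noncomputable def lfun {n : ℕ} (A M : Matrix (Fin n) (Fin n) ℝ) : ℝ :=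
  ∑ p : Fin n × Fin n, (2 * pcs A p.1 p.2 - 1) * pcs M p.1 p.2

private lemma pcs_mem {m : ℕ} {A : Matrix (Fin (m+1)) (Fin (m+1)) ℝ} (hA : IsASM (m+1) A)
    (i j : Fin (m+1)) : pcs A i j = 0 ∨ pcs A i j = 1 :=
  prefix_mem (fun k => A k j) (fun k => hA.1 k j) (hA.2.2.2.2 j) (hA.2.2.1 j) i

private lemma term_le {a b : ℝ} (ha : a = 0 ∨ a = 1) (hb : b = 0 ∨ b = 1) :
    (2*a-1)*b ≤ (2*a-1)*a := by
  rcases ha with rfl | rfl <;> rcases hb with rfl | rfl <;> norm_num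

private lemma term_lt {a b : ℝ} (ha : a = 0 ∨ a = 1) (hb : b = 0 ∨ b = 1) (hne : b ≠ a) :
    (2*a-1)*b < (2*a-1)*a := by
  rcases ha with rfl | rfl <;> rcases hb with rfl | rfl <;> norm_num at *

private lemma pcs_ne {m : ℕ} {A B : Matrix (Fin (m+1)) (Fin (m+1)) ℝ} (hne : B ≠ A) :
    ∃ p : Fin (m+1) × Fin (m+1), pcs B p.1 p.2 ≠ pcs A p.1 p.2 := by
  have hex : ∃ i j, B i j ≠ A i j := by
    by_contra h; push_neg at h; exact hne (Matrix.ext fun i j => h i j)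
  obtain ⟨i, j, hij⟩ := hex
  classical
  set T := Finset.univ.filter (fun i => B i j ≠ A i j) with hT
  have hTne : T.Nonempty := ⟨i, by simp [hT, hij]⟩
  set i₀ := T.min' hTne with hi₀def
  have hi₀ : B i₀ j ≠ A i₀ j := by
    have h := T.min'_mem hTne
    simp only [hT, Finset.mem_filter] at h
    exact h.2
  have hmin : ∀ k, k < i₀ → B k j = A k j := by
    intro k hk
    by_contra hc
    exact absurd (T.min'_le k (by simp [hT, hc])) (not_le.mpr hk)
  refine ⟨(i₀, j), ?_⟩
  have hsplit : ∀ M : Matrix (Fin (m+1)) (Fin (m+1)) ℝ,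
      pcs M i₀ j = M i₀ j + ∑ k ∈ Finset.Iio i₀, M k j := by
    intro M
    rw [pcs, ← Finset.Iio_insert, Finset.sum_insert (by simp)]
  have hIio : ∑ k ∈ Finset.Iio i₀, B k j = ∑ k ∈ Finset.Iio i₀, A k j :=
    Finset.sum_congr rfl fun k hk => hmin k (Finset.mem_Iio.mp hk)
  simp only [hsplit, hIio]
  intro h
  exact hi₀ (by linarith [add_right_cancel h])

private lemma lfun_le {m : ℕ} {A B : Matrix (Fin (m+1)) (Fin (m+1)) ℝ}
    (hA : IsASM (m+1) A) (hB : IsASM (m+1) B) : lfun A B ≤ lfun A A :=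
  Finset.sum_le_sum fun p _ => term_le (pcs_mem hA p.1 p.2) (pcs_mem hB p.1 p.2)

private lemma lfun_lt {m : ℕ} {A B : Matrix (Fin (m+1)) (Fin (m+1)) ℝ}
    (hA : IsASM (m+1) A) (hB : IsASM (m+1) B) (hne : B ≠ A) : lfun A B < lfun A A := by
  obtain ⟨p, hp⟩ := pcs_ne hne
  exact Finset.sum_lt_sum (fun q _ => term_le (pcs_mem hA q.1 q.2) (pcs_mem hB q.1 q.2))
    ⟨p, Finset.mem_univ p, term_lt (pcs_mem hA p.1 p.2) (pcs_mem hB p.1 p.2) hp⟩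

private lemma lfun_isLinear {n : ℕ} (A : Matrix (Fin n) (Fin n) ℝ) : IsLinearMap ℝ (lfun A) := by
  constructor
  · intro x y
    rw [lfun, lfun, lfun, ← Finset.sum_add_distrib]
    refine Finset.sum_congr rfl fun p _ => ?_
    have : pcs (x + y) p.1 p.2 = pcs x p.1 p.2 + pcs y p.1 p.2 := by
      simp [pcs, Matrix.add_apply, Finset.sum_add_distrib]
    rw [this, mul_add]
  · intro c x
    rw [lfun, lfun, smul_eq_mul, Finset.mul_sum]
    refine Finset.sum_congr rfl fun p _ => ?_
    have : pcs (c • x) p.1 p.2 = c * pcs x p.1 p.2 := by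
      simp [pcs, Matrix.smul_apply, smul_eq_mul, Finset.mul_sum]
    rw [this]; ring

open Finset in
private lemma lfun_comb {n : ℕ} (A : Matrix (Fin n) (Fin n) ℝ) {a b : ℝ}
    (x y : Matrix (Fin n) (Fin n) ℝ) :
    lfun A (a • x + b • y) = a * lfun A x + b * lfun A y := by
  have h := lfun_isLinear A
  rw [h.map_add, h.map_smul, h.map_smul]; rfl

private lemma hull_le {m : ℕ} {A : Matrix (Fin (m+1)) (Fin (m+1)) ℝ} (hA : IsASM (m+1) A)
    {y : Matrix (Fin (m+1)) (Fin (m+1)) ℝ} (hy : y ∈ ASMPolytope (m+1)) :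
    lfun A y ≤ lfun A A := by
  have := convexHull_min
    (show {B : Matrix (Fin (m+1)) (Fin (m+1)) ℝ | IsASM (m+1) B} ⊆ {w | lfun A w ≤ lfun A A}
      from fun B hB => lfun_le hA hB)
    (convex_halfSpace_le (lfun_isLinear A) (lfun A A))
  exact this hy

private lemma hull_eq_of_lfun_eq {m : ℕ} {A : Matrix (Fin (m+1)) (Fin (m+1)) ℝ}
    (hA : IsASM (m+1) A) {y : Matrix (Fin (m+1)) (Fin (m+1)) ℝ}
    (hy : y ∈ ASMPolytope (m+1)) (hey : lfun A y = lfun A A) : y = A := by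
  rw [ASMPolytope, _root_.convexHull_eq] at hy
  obtain ⟨ι, t, w, z, hw0, hw1, hz, hyc⟩ := hy
  rw [Finset.centerMass_eq_of_sum_1 _ _ hw1] at hyc
  have L := lfun_isLinear A
  have hly : lfun A y = ∑ i ∈ t, w i * lfun A (z i) := by
    rw [← hyc]
    rw [show (lfun A (∑ i ∈ t, w i • z i)) = ((IsLinearMap.mk' _ L) (∑ i ∈ t, w i • z i)) from rfl,
      map_sum]
    exact Finset.sum_congr rfl fun i _ => by
      rw [map_smul]; rfl
  have hle : ∀ i ∈ t, lfun A (z i) ≤ lfun A A := fun i hi => lfun_le hA (hz i hi)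
  have hzero : ∀ i ∈ t, w i * (lfun A A - lfun A (z i)) = 0 := by
    have hsum0 : ∑ i ∈ t, w i * (lfun A A - lfun A (z i)) = 0 := by
      have : ∑ i ∈ t, w i * (lfun A A - lfun A (z i))
          = (∑ i ∈ t, w i) * lfun A A - ∑ i ∈ t, w i * lfun A (z i) := by
        rw [Finset.sum_mul, ← Finset.sum_sub_distrib]
        exact Finset.sum_congr rfl fun i _ => by ring
      rw [this, hw1, ← hly, one_mul, hey, sub_self]
    exact (Finset.sum_eq_zero_iff_of_nonneg fun i hi =>
      mul_nonneg (hw0 i hi) (sub_nonneg.mpr (hle i hi))).mp hsum0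
  have hzA : ∀ i ∈ t, w i • z i = w i • A := by
    intro i hi
    rcases eq_or_lt_of_le (hw0 i hi) with h | h
    · rw [← h, zero_smul, zero_smul]
    · have hlz : lfun A (z i) = lfun A A := by
        have := hzero i hi
        rcases mul_eq_zero.mp this with h' | h'
        · exact absurd h'.symm (ne_of_lt h)
        · linarith
      have : z i = A := by
        by_contra hne
        exact absurd hlz (ne_of_lt (lfun_lt hA (hz i hi) hne))
      rw [this]
  rw [← hyc, Finset.sum_congr rfl hzA, ← Finset.sum_smul, hw1, one_smul]

/-- The extreme points of the alternating sign matrix polytope are exactly the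
`n × n` alternating sign matrices. -/
theorem extremePoints_asmPolytope (n : ℕ) (hn : 1 ≤ n) :
    Set.extremePoints ℝ (ASMPolytope n) =
      {A : Matrix (Fin n) (Fin n) ℝ | IsASM n A} := by
  obtain ⟨m, rfl⟩ : ∃ m, n = m + 1 := ⟨n - 1, (Nat.succ_pred_eq_of_pos hn).symm⟩
  ext A
  constructor
  · intro h
    rw [ASMPolytope] at h
    exact extremePoints_convexHull_subset h
  · intro hA
    rw [mem_extremePoints]
    refine ⟨subset_convexHull ℝ _ hA, ?_⟩
    intro x₁ h₁ x₂ h₂ hseg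
    obtain ⟨a, b, ha, hb, hab, hsum⟩ := hseg
    have l1 := hull_le hA h₁
    have l2 := hull_le hA h₂
    have hc : a * lfun A x₁ + b * lfun A x₂ = lfun A A := by
      rw [← lfun_comb A x₁ x₂, hsum]
    have k1 : a * lfun A x₁ ≤ a * lfun A A := mul_le_mul_of_nonneg_left l1 ha.le
    have k2 : b * lfun A x₂ ≤ b * lfun A A := mul_le_mul_of_nonneg_left l2 hb.le
    have h3 : a * lfun A A + b * lfun A A = lfun A A := by rw [← add_mul, hab, one_mul]
    have he1 : lfun A x₁ = lfun A A := by
      by_contra h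
      have hlt : a * lfun A x₁ < a * lfun A A :=
        mul_lt_mul_of_pos_left (lt_of_le_of_ne l1 h) ha
      linarith
    have he2 : lfun A x₂ = lfun A A := by
      by_contra h
      have hlt : b * lfun A x₂ < b * lfun A A :=
        mul_lt_mul_of_pos_left (lt_of_le_of_ne l2 h) hb
      linarith
    exact ⟨hull_eq_of_lfun_eq hA h₁ he1, hull_eq_of_lfun_eq hA h₂ he2⟩
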